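/- arXiv:2310.08935 — 2 statements merged into one kernel-verified Lean document; each statement's English description precedes it below -/
import Mathlib

section
/- (Algebraic core of Theorem 3.) Let q_A, q_B ∈ (0,1), let h ≥ 1, and let a_1, …, a_{2h} be positive integers. Define b_{2j−1} = (−1)^{a_{2j−1}} q_A^{a_{2j−1}} and b_{2j} = (−1)^{a_{2j}} q_B^{a_{2j}} for 1 ≤ j ≤ h, extended periodically with period 2h. Then Q = h + Σ_{m=1}^{2h} Σ_{j=1}^{2h−1} (−1)^j Π_{i=m}^{m+j−1} b_i + h Π_{i=1}^{2h} b_i is strictly positive. -/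
open Finset



/-- The quantity of interest. -/
def EE (h : ℕ) (c : ℕ → ℝ) : ℝ :=
    (h : ℝ)
        + (∑ m ∈ Finset.Icc 1 (2 * h), ∑ j ∈ Finset.Icc 1 (2 * h - 1),
            (-1 : ℝ) ^ j * ∏ i ∈ Finset.Icc m (m + j - 1), c i)
        + (h : ℝ) * ∏ i ∈ Finset.Icc 1 (2 * h), c i

/-- Partial products of `-c`. -/
def gg (c : ℕ → ℝ) (u : ℕ) : ℝ := ∏ i ∈ Icc 1 u, (-c i)

/-- periodicity in reduced form -/
def Per (n : ℕ) (c : ℕ → ℝ) : Prop := ∀ i, 1 ≤ i → c i = c ((i - 1) % n + 1)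

lemma sum_Ioc_shift (F : ℕ → ℝ) (a : ℕ) : ∀ s : ℕ,
    ∑ w ∈ Ioc a (a + s), F w = ∑ v ∈ Ioc 0 s, F (a + v) := by
  intro s
  induction s with
  | zero => simp
  | succ s ih =>
    have h1 : a ≤ a + s := Nat.le_add_right a s
    have h2 : a + (s+1) = (a + s) + 1 := by omega
    rw [h2, Finset.sum_Ioc_succ_top h1, ih, Finset.sum_Ioc_succ_top (Nat.zero_le s)]
    congr 1

lemma aux_comm (f : ℕ → ℝ) : ∀ N : ℕ,
    ∑ u ∈ range N, f u * (∑ w ∈ Ico (u+1) N, f w)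
      = ∑ u ∈ range N, f u * (∑ v ∈ range u, f v) := by
  intro N
  induction N with
  | zero => simp
  | succ N ih =>
    rw [Finset.sum_range_succ, Finset.sum_range_succ]
    have h1 : ∀ u ∈ range N, f u * (∑ w ∈ Ico (u+1) (N+1), f w)
        = f u * (∑ w ∈ Ico (u+1) N, f w) + f u * f N := by
      intro u hu
      rw [Finset.sum_Ico_succ_top (by simpa using Finset.mem_range.mp hu), mul_add]
    rw [Finset.sum_congr rfl h1, Finset.sum_add_distrib, ih]
    have h2 : ∑ u ∈ range N, f u * f N = (∑ u ∈ range N, f u) * f N := by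
      rw [Finset.sum_mul]
    rw [h2]
    have h3 : Ico (N+1) (N+1) = ∅ := Finset.Ico_self (N+1)
    rw [h3]
    simp [mul_comm]

lemma aux_sq (f : ℕ → ℝ) : ∀ N : ℕ,
    (∑ u ∈ range N, f u)^2
      = (∑ u ∈ range N, (f u)^2) + 2 * ∑ u ∈ range N, f u * (∑ v ∈ range u, f v) := by
  intro N
  induction N with
  | zero => simp
  | succ N ih =>
    rw [Finset.sum_range_succ, Finset.sum_range_succ, Finset.sum_range_succ]
    ring_nf
    nlinarith [ih]

section Vertex

variable (h : ℕ) (c : ℕ → ℝ)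

lemma gg_zero : gg c 0 = 1 := by simp [gg]

lemma gg_succ (u : ℕ) : gg c (u+1) = gg c u * (-c (u+1)) := by
  unfold gg
  exact Finset.prod_Icc_succ_top (Nat.le_add_left 1 u) _

lemma gg_Ioc (u : ℕ) : gg c u = ∏ i ∈ Ioc 0 u, (-c i) := by
  unfold gg
  rw [← Finset.Icc_add_one_left_eq_Ioc 0 u]; rfl

lemma gg_pm (hpm : ∀ i, 1 ≤ i → i ≤ 2*h → (c i = 1 ∨ c i = -1)) :
    ∀ u, u ≤ 2*h → (gg c u = 1 ∨ gg c u = -1) := by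
  intro u
  induction u with
  | zero => intro _; left; exact gg_zero c
  | succ u ih =>
    intro hu
    have h1 := ih (by omega)
    have h2 := hpm (u+1) (by omega) hu
    rw [gg_succ]
    rcases h1 with h1 | h1 <;> rcases h2 with h2 | h2 <;> rw [h1, h2] <;> norm_num

lemma gg_sq (hpm : ∀ i, 1 ≤ i → i ≤ 2*h → (c i = 1 ∨ c i = -1)) (u : ℕ) (hu : u ≤ 2*h) :
    gg c u * gg c u = 1 := by
  rcases gg_pm h c hpm u hu with h1 | h1 <;> rw [h1] <;> norm_num

lemma winA (hpm : ∀ i, 1 ≤ i → i ≤ 2*h → (c i = 1 ∨ c i = -1))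
    (u w : ℕ) (huw : u ≤ w) (hw : w ≤ 2*h) :
    ∏ i ∈ Ioc u w, (-c i) = gg c u * gg c w := by
  have key : gg c u * ∏ i ∈ Ioc u w, (-c i) = gg c w := by
    rw [gg_Ioc, gg_Ioc]
    exact Finset.prod_Ioc_consecutive _ (Nat.zero_le u) huw
  calc ∏ i ∈ Ioc u w, (-c i) = (gg c u * gg c u) * ∏ i ∈ Ioc u w, (-c i) := by
        rw [gg_sq h c hpm u (le_trans huw hw)]; ring
    _ = gg c u * (gg c u * ∏ i ∈ Ioc u w, (-c i)) := by ring
    _ = gg c u * gg c w := by rw [key]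

lemma win_shift (hh : 1 ≤ h) (hper : Per (2*h) c) :
    ∀ s, s < 2*h → ∏ i ∈ Ioc (2*h) (2*h + s), (-c i) = gg c s := by
  intro s
  induction s with
  | zero => simp [gg_zero]
  | succ s ih =>
    intro hs
    have h2 : 2*h + (s+1) = (2*h + s) + 1 := by omega
    rw [h2, Finset.prod_Ioc_succ_top (Nat.le_add_right _ _), ih (by omega), gg_succ]
    have hcc : c (2*h + s + 1) = c (s+1) := by
      have := hper (2*h + s + 1) (by omega)
      rw [this]
      congr 1
      have e1 : 2*h + s + 1 - 1 = 2*h + s := by omega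
      rw [e1, Nat.add_mod_left, Nat.mod_eq_of_lt (by omega : s < 2*h)]
    rw [hcc]

end Vertex

lemma peel_Ico (f : ℕ → ℝ) (u : ℕ) (hu : 1 ≤ u) :
    ∑ v ∈ Ico 0 u, f v = f 0 + ∑ v ∈ Ioc 0 (u-1), f v := by
  have h1 : ∑ v ∈ Ico 0 1, f v + ∑ v ∈ Ico 1 u, f v = ∑ v ∈ Ico 0 u, f v :=
    Finset.sum_Ico_consecutive f (by omega) hu
  have h2 : Ico 1 u = Ioc 0 (u-1) := by
    have : u = (u-1)+1 := by omega
    rw [this, ← Finset.Ico_add_one_add_one_eq_Ioc 0 (u-1+1-1)]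
    congr 1
  have h3 : ∑ v ∈ Ico 0 1, f v = f 0 := by
    rw [show Ico 0 1 = range 1 from rfl, Finset.sum_range_one]
  rw [← h1, h2, h3]

lemma Vinner (h : ℕ) (c : ℕ → ℝ) (hh : 1 ≤ h) (hper : Per (2*h) c)
    (hpm : ∀ i, 1 ≤ i → i ≤ 2*h → (c i = 1 ∨ c i = -1)) (u : ℕ) (hu : u < 2*h) :
    ∑ j ∈ Icc 1 (2*h - 1), ∏ i ∈ Ioc u (u+j), (-c i)
      = gg c u * (∑ w ∈ Ioc u (2*h - 1), gg c w)
        + gg c (2*h) * (gg c u * ∑ v ∈ Ico 0 u, gg c v) := by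
  have e0 : ∑ j ∈ Icc 1 (2*h - 1), ∏ i ∈ Ioc u (u+j), (-c i)
      = ∑ w ∈ Ioc u (u + (2*h - 1)), ∏ i ∈ Ioc u w, (-c i) := by
    rw [show Icc 1 (2*h-1) = Ioc 0 (2*h-1) from Finset.Icc_add_one_left_eq_Ioc 0 _]
    exact (sum_Ioc_shift (fun w => ∏ i ∈ Ioc u w, (-c i)) u (2*h-1)).symm
  rcases Nat.eq_zero_or_pos u with hu0 | hu1
  · subst hu0
    rw [e0]
    have e1 : ∀ w ∈ Ioc 0 (0 + (2*h - 1)), (∏ i ∈ Ioc 0 w, (-c i)) = gg c 0 * gg c w := by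
      intro w hw
      obtain ⟨hw1, hw2⟩ := Finset.mem_Ioc.mp hw
      exact winA h c hpm 0 w (by omega) (by omega)
    rw [Finset.sum_congr rfl e1]
    simp only [Nat.zero_add, Finset.Ico_self, Finset.sum_empty, mul_zero, add_zero]
    rw [← Finset.mul_sum]
  · -- u ≥ 1
    rw [e0]
    have hsplit : (∑ w ∈ Ioc u (2*h), ∏ i ∈ Ioc u w, (-c i))
        + (∑ w ∈ Ioc (2*h) (u + (2*h - 1)), ∏ i ∈ Ioc u w, (-c i))
        = ∑ w ∈ Ioc u (u + (2*h - 1)), ∏ i ∈ Ioc u w, (-c i) :=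
      Finset.sum_Ioc_consecutive _ (by omega) (by omega)
    rw [← hsplit]
    -- piece 1
    have p1 : ∑ w ∈ Ioc u (2*h), ∏ i ∈ Ioc u w, (-c i)
        = gg c u * (∑ w ∈ Ioc u (2*h - 1), gg c w) + gg c u * gg c (2*h) := by
      have e1 : ∀ w ∈ Ioc u (2*h), (∏ i ∈ Ioc u w, (-c i)) = gg c u * gg c w := by
        intro w hw
        obtain ⟨hw1, hw2⟩ := Finset.mem_Ioc.mp hw
        exact winA h c hpm u w (by omega) hw2
      rw [Finset.sum_congr rfl e1]
      rw [show 2*h = (2*h-1)+1 by omega]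
      rw [Finset.sum_Ioc_succ_top (by omega : u ≤ 2*h-1)]
      rw [show (2*h-1)+1 = 2*h by omega, ← Finset.mul_sum]
    -- piece 2
    have p2 : ∑ w ∈ Ioc (2*h) (u + (2*h - 1)), ∏ i ∈ Ioc u w, (-c i)
        = gg c u * gg c (2*h) * ∑ v ∈ Ioc 0 (u-1), gg c v := by
      have e2 : u + (2*h - 1) = 2*h + (u - 1) := by omega
      rw [e2, sum_Ioc_shift (fun w => ∏ i ∈ Ioc u w, (-c i)) (2*h) (u-1)]
      have e3 : ∀ v ∈ Ioc 0 (u-1), (∏ i ∈ Ioc u (2*h + v), (-c i))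
          = gg c u * gg c (2*h) * gg c v := by
        intro v hv
        obtain ⟨hv1, hv2⟩ := Finset.mem_Ioc.mp hv
        have hsplit2 : (∏ i ∈ Ioc u (2*h), (-c i)) * (∏ i ∈ Ioc (2*h) (2*h + v), (-c i))
            = ∏ i ∈ Ioc u (2*h + v), (-c i) :=
          Finset.prod_Ioc_consecutive _ (by omega) (by omega)
        rw [← hsplit2, winA h c hpm u (2*h) (by omega) (le_refl _),
          win_shift h c hh hper v (by omega)]
      rw [Finset.sum_congr rfl e3, ← Finset.mul_sum]
    rw [p1, p2, peel_Ico (gg c) u hu1, gg_zero]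
    ring

lemma vertex_eq (h : ℕ) (c : ℕ → ℝ) (hh : 1 ≤ h) (hper : Per (2*h) c)
    (hpm : ∀ i, 1 ≤ i → i ≤ 2*h → (c i = 1 ∨ c i = -1)) :
    EE h c = (1 + gg c (2*h)) * (∑ u ∈ range (2*h), gg c u)^2 / 2 := by
  have sign : ∀ m j : ℕ, 1 ≤ m → 1 ≤ j →
      (-1 : ℝ)^j * ∏ i ∈ Icc m (m+j-1), c i = ∏ i ∈ Icc m (m+j-1), (-c i) := by
    intro m j hm hj
    have e1 : ∏ i ∈ Icc m (m+j-1), (-c i) = (∏ _i ∈ Icc m (m+j-1), (-1 : ℝ)) * ∏ i ∈ Icc m (m+j-1), c i := by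
      rw [← Finset.prod_mul_distrib]
      simp
    rw [e1, Finset.prod_const, Nat.card_Icc]
    congr 2
    omega
  have mainprod : ∏ i ∈ Icc 1 (2*h), c i = gg c (2*h) := by
    have e1 : gg c (2*h) = (∏ _i ∈ Icc 1 (2*h), (-1 : ℝ)) * ∏ i ∈ Icc 1 (2*h), c i := by
      unfold gg
      rw [← Finset.prod_mul_distrib]
      simp
    rw [e1, Finset.prod_const, Nat.card_Icc]
    have : (-1 : ℝ)^(2*h+1-1) = 1 := by
      have : 2*h+1-1 = 2*h := by omega
      rw [this]
      exact Even.neg_one_pow (even_two_mul h)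
    rw [this, one_mul]
  -- rewrite the double sum
  have step1 : ∑ m ∈ Icc 1 (2*h), ∑ j ∈ Icc 1 (2*h-1),
      (-1 : ℝ)^j * ∏ i ∈ Icc m (m+j-1), c i
      = ∑ u ∈ range (2*h), ∑ j ∈ Icc 1 (2*h-1), ∏ i ∈ Ioc u (u+j), (-c i) := by
    rw [← Finset.Ico_add_one_right_eq_Icc, Finset.sum_Ico_eq_sum_range]
    apply Finset.sum_congr (by congr 1)
    intro u hu
    apply Finset.sum_congr rfl
    intro j hj
    obtain ⟨hj1, _⟩ := Finset.mem_Icc.mp hj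
    rw [sign (1+u) j (by omega) hj1]
    congr 1
    rw [show 1+u+j-1 = u+j by omega, show (1+u) = u+1 by omega, Finset.Icc_add_one_left_eq_Ioc]
  have step2 : ∑ u ∈ range (2*h), ∑ j ∈ Icc 1 (2*h-1), ∏ i ∈ Ioc u (u+j), (-c i)
      = (1 + gg c (2*h)) * ∑ u ∈ range (2*h), gg c u * (∑ v ∈ range u, gg c v) := by
    have e1 : ∀ u ∈ range (2*h), ∑ j ∈ Icc 1 (2*h-1), ∏ i ∈ Ioc u (u+j), (-c i)
        = gg c u * (∑ w ∈ Ico (u+1) (2*h), gg c w)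
          + gg c (2*h) * (gg c u * ∑ v ∈ range u, gg c v) := by
      intro u hu
      rw [Vinner h c hh hper hpm u (Finset.mem_range.mp hu)]
      congr 2
      · congr 1
        rw [show 2*h = (2*h-1)+1 by omega, Finset.Ico_add_one_add_one_eq_Ioc]
        congr 1
      · rw [Finset.range_eq_Ico]
    rw [Finset.sum_congr rfl e1, Finset.sum_add_distrib, aux_comm, ← Finset.mul_sum]
    ring
  have hsq := aux_sq (gg c) (2*h)
  have hdiag : ∑ u ∈ range (2*h), (gg c u)^2 = (2*h : ℝ) := by
    have e1 : ∀ u ∈ range (2*h), (gg c u)^2 = (1:ℝ) := by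
      intro u hu
      rw [sq, gg_sq h c hpm u (le_of_lt (Finset.mem_range.mp hu))]
    rw [Finset.sum_congr rfl e1, Finset.sum_const, Finset.card_range]
    push_cast
    ring
  have hD := gg_pm h c hpm (2*h) (le_refl _)
  unfold EE
  rw [step1, step2, mainprod]
  have hT : ∑ u ∈ range (2*h), gg c u * (∑ v ∈ range u, gg c v)
      = ((∑ u ∈ range (2*h), gg c u)^2 - (2*h:ℝ)) / 2 := by
    rw [hsq, hdiag]
    ring
  rw [hT]
  push_cast
  ring

/-! ## Affine interpolation machinery -/

def IsAff (f : ℝ → ℝ) : Prop := ∃ A B : ℝ, ∀ x, f x = A + B * x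

lemma IsAff.const (r : ℝ) : IsAff (fun _ => r) := ⟨r, 0, fun x => by ring⟩

lemma IsAff.add {f g : ℝ → ℝ} (hf : IsAff f) (hg : IsAff g) :
    IsAff (fun x => f x + g x) := by
  obtain ⟨A, B, hf⟩ := hf
  obtain ⟨A', B', hg⟩ := hg
  exact ⟨A + A', B + B', fun x => by dsimp only; rw [hf, hg]; ring⟩

lemma IsAff.const_mul {f : ℝ → ℝ} (r : ℝ) (hf : IsAff f) :
    IsAff (fun x => r * f x) := by
  obtain ⟨A, B, hf⟩ := hf
  exact ⟨r * A, r * B, fun x => by dsimp only; rw [hf]; ring⟩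

lemma IsAff.sum {ι : Type*} (s : Finset ι) (F : ι → ℝ → ℝ)
    (hF : ∀ i ∈ s, IsAff (F i)) : IsAff (fun x => ∑ i ∈ s, F i x) := by
  induction s using Finset.cons_induction with
  | empty => simpa using IsAff.const 0
  | cons a s ha ih =>
    have h1 : IsAff (F a) := hF a (Finset.mem_cons_self a s)
    have h2 : IsAff (fun x => ∑ i ∈ s, F i x) := ih (fun i hi => hF i (Finset.mem_cons_of_mem hi))
    have := h1.add h2
    convert this using 2 with x
    exact Finset.sum_cons ha

lemma IsAff.interp {f : ℝ → ℝ} (hf : IsAff f) (x : ℝ) :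
    f x = (1 + x)/2 * f 1 + (1 - x)/2 * f (-1) := by
  obtain ⟨A, B, hf⟩ := hf
  rw [hf, hf, hf]
  ring

/-! ## The update function -/

def upd (n : ℕ) (c : ℕ → ℝ) (k : ℕ) (x : ℝ) : ℕ → ℝ :=
  fun i => if 1 ≤ i ∧ (i - 1) % n + 1 = k then x else c i

lemma upd_eval (n : ℕ) (c : ℕ → ℝ) (k : ℕ) (x : ℝ) (i : ℕ) (h1 : 1 ≤ i) (h2 : i ≤ n) :
    upd n c k x i = if i = k then x else c i := by
  unfold upd
  have e1 : (i - 1) % n = i - 1 := Nat.mod_eq_of_lt (by omega)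
  by_cases hik : i = k
  · rw [if_pos ⟨h1, by omega⟩, if_pos hik]
  · rw [if_neg (by rw [e1]; omega), if_neg hik]

lemma upd_per (n : ℕ) (c : ℕ → ℝ) (k : ℕ) (x : ℝ) (hper : Per n c) :
    Per n (upd n c k x) := by
  intro i hi
  unfold upd
  have hr1 : 1 ≤ (i - 1) % n + 1 := by omega
  have hrr : ((i - 1) % n + 1 - 1) % n = (i - 1) % n := by
    simp [Nat.mod_mod_of_dvd _ (dvd_refl n)]
  by_cases hc : (i - 1) % n + 1 = k
  · rw [if_pos ⟨hi, hc⟩, if_pos ⟨hr1, by rw [hrr]; exact hc⟩]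
  · rw [if_neg (by tauto), if_neg (by rw [hrr]; tauto)]
    exact hper i hi

lemma upd_self (n : ℕ) (c : ℕ → ℝ) (k : ℕ) (hper : Per n c) :
    upd n c k (c k) = c := by
  funext i
  unfold upd
  by_cases hc : 1 ≤ i ∧ (i - 1) % n + 1 = k
  · rw [if_pos hc]
    rw [hper i hc.1, hc.2]
  · rw [if_neg hc]

lemma prod_upd_aff (n : ℕ) (c : ℕ → ℝ) (k : ℕ) (s : Finset ℕ)
    (hU : ∀ i1 ∈ s, ∀ i2 ∈ s, (1 ≤ i1 ∧ (i1 - 1) % n + 1 = k) →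
      (1 ≤ i2 ∧ (i2 - 1) % n + 1 = k) → i1 = i2) :
    IsAff (fun x => ∏ i ∈ s, upd n c k x i) := by
  by_cases hex : ∃ i0 ∈ s, 1 ≤ i0 ∧ (i0 - 1) % n + 1 = k
  · obtain ⟨i0, hi0s, hP⟩ := hex
    refine ⟨0, ∏ i ∈ s.erase i0, c i, fun x => ?_⟩
    dsimp only
    rw [← Finset.mul_prod_erase s _ hi0s]
    have h1 : upd n c k x i0 = x := if_pos hP
    have h2 : ∏ i ∈ s.erase i0, upd n c k x i = ∏ i ∈ s.erase i0, c i := by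
      apply Finset.prod_congr rfl
      intro i hi
      obtain ⟨hne, his⟩ := Finset.mem_erase.mp hi
      have : ¬(1 ≤ i ∧ (i - 1) % n + 1 = k) := by
        intro hcon
        exact hne (hU i his i0 hi0s hcon hP)
      exact if_neg this
    rw [h1, h2]
    ring
  · push_neg at hex
    refine ⟨∏ i ∈ s, c i, 0, fun x => ?_⟩
    have h2 : ∏ i ∈ s, upd n c k x i = ∏ i ∈ s, c i := by
      apply Finset.prod_congr rfl
      intro i hi
      exact if_neg (fun hcon => hex i hi hcon.1 hcon.2)
    dsimp only
    rw [h2]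
    ring

lemma window_unique (n : ℕ) (k m w : ℕ) (hm : 1 ≤ m) (hw : w < m + n) :
    ∀ i1 ∈ Icc m w, ∀ i2 ∈ Icc m w, (1 ≤ i1 ∧ (i1 - 1) % n + 1 = k) →
      (1 ≤ i2 ∧ (i2 - 1) % n + 1 = k) → i1 = i2 := by
  intro i1 hi1 i2 hi2 hc1 hc2
  obtain ⟨ha1, hb1⟩ := Finset.mem_Icc.mp hi1
  obtain ⟨ha2, hb2⟩ := Finset.mem_Icc.mp hi2
  have hmod : (i1 - 1) % n = (i2 - 1) % n := by omega
  by_contra hne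
  rcases Nat.lt_or_ge i1 i2 with hlt | hge
  · have hdvd : n ∣ (i2 - 1) - (i1 - 1) :=
      (Nat.modEq_iff_dvd' (by omega)).mp hmod
    have := Nat.le_of_dvd (by omega) hdvd
    omega
  · have hlt2 : i2 < i1 := by omega
    have hdvd : n ∣ (i1 - 1) - (i2 - 1) :=
      (Nat.modEq_iff_dvd' (by omega)).mp hmod.symm
    have := Nat.le_of_dvd (by omega) hdvd
    omega

lemma EE_upd_aff (h : ℕ) (c : ℕ → ℝ) (k : ℕ) (hh : 1 ≤ h) :
    IsAff (fun x => EE h (upd (2*h) c k x)) := by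
  unfold EE
  apply IsAff.add
  apply IsAff.add
  · exact IsAff.const _
  · apply IsAff.sum
    intro m hm
    apply IsAff.sum
    intro j hj
    obtain ⟨hm1, hm2⟩ := Finset.mem_Icc.mp hm
    obtain ⟨hj1, hj2⟩ := Finset.mem_Icc.mp hj
    exact IsAff.const_mul _
      (prod_upd_aff (2*h) c k _ (window_unique (2*h) k m (m+j-1) hm1 (by omega)))
  · exact IsAff.const_mul _
      (prod_upd_aff (2*h) c k _ (window_unique (2*h) k 1 (2*h) (le_refl 1) (by omega)))

lemma NN (h : ℕ) (hh : 1 ≤ h) : ∀ K : ℕ, ∀ c : ℕ → ℝ, Per (2*h) c →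
    (∀ i, 1 ≤ i → i ≤ 2*h → |c i| ≤ 1) →
    (∀ i, 1 ≤ i → i ≤ 2*h → K < i → (c i = 1 ∨ c i = -1)) →
    0 ≤ EE h c := by
  intro K
  induction K with
  | zero =>
    intro c hper hb hpm
    have hpm' : ∀ i, 1 ≤ i → i ≤ 2*h → (c i = 1 ∨ c i = -1) :=
      fun i h1 h2 => hpm i h1 h2 h1
    rw [vertex_eq h c hh hper hpm']
    rcases gg_pm h c hpm' (2*h) (le_refl _) with hD | hD <;> rw [hD] <;> positivity
  | succ K ih =>
    intro c hper hb hpm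
    by_cases hKn : K + 1 ≤ 2*h
    · have haff := EE_upd_aff h c (K+1) hh
      have hupd1 : ∀ (x : ℝ), (x = 1 ∨ x = -1) →
          (∀ i, 1 ≤ i → i ≤ 2*h → |upd (2*h) c (K+1) x i| ≤ 1)
          ∧ (∀ i, 1 ≤ i → i ≤ 2*h → K < i → (upd (2*h) c (K+1) x i = 1 ∨ upd (2*h) c (K+1) x i = -1)) := by
        intro x hx
        constructor
        · intro i h1 h2
          rw [upd_eval (2*h) c (K+1) x i h1 h2]
          by_cases hik : i = K+1
          · rw [if_pos hik]
            rcases hx with hx | hx <;> rw [hx] <;> norm_num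
          · rw [if_neg hik]; exact hb i h1 h2
        · intro i h1 h2 h3
          rw [upd_eval (2*h) c (K+1) x i h1 h2]
          by_cases hik : i = K+1
          · rw [if_pos hik]; exact hx
          · rw [if_neg hik]; exact hpm i h1 h2 (by omega)
      have h1 : 0 ≤ EE h (upd (2*h) c (K+1) 1) := by
        obtain ⟨hA, hB⟩ := hupd1 1 (Or.inl rfl)
        exact ih (upd (2*h) c (K+1) 1) (upd_per _ _ _ _ hper) hA hB
      have h2 : 0 ≤ EE h (upd (2*h) c (K+1) (-1)) := by
        obtain ⟨hA, hB⟩ := hupd1 (-1) (Or.inr rfl)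
        exact ih (upd (2*h) c (K+1) (-1)) (upd_per _ _ _ _ hper) hA hB
      have hc : EE h c = EE h (upd (2*h) c (K+1) (c (K+1))) := by
        rw [upd_self (2*h) c (K+1) hper]
      have hck := hb (K+1) (by omega) hKn
      rw [abs_le] at hck
      have hi := haff.interp (c (K+1))
      rw [hc, hi]
      have w1 : (0:ℝ) ≤ (1 + c (K+1))/2 := by linarith [hck.1]
      have w2 : (0:ℝ) ≤ (1 - c (K+1))/2 := by linarith [hck.2]
      have := mul_nonneg w1 h1
      have := mul_nonneg w2 h2
      linarith
    · exact ih c hper hb (fun i h1 h2 h3 => hpm i h1 h2 (by omega))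

lemma POS (h : ℕ) (hh : 1 ≤ h) : ∀ J : ℕ, ∀ c : ℕ → ℝ, Per (2*h) c →
    (∀ i, 1 ≤ i → i ≤ 2*h → |c i| ≤ 1) →
    (∀ i, 1 ≤ i → i ≤ 2*h → i ≤ J → |c i| < 1) →
    (∀ i, 1 ≤ i → i ≤ 2*h → J < i → c i = -1) →
    0 < EE h c := by
  intro J
  induction J with
  | zero =>
    intro c hper hb hstrict hneg
    have hpm' : ∀ i, 1 ≤ i → i ≤ 2*h → (c i = 1 ∨ c i = -1) :=
      fun i h1 h2 => Or.inr (hneg i h1 h2 h1)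
    rw [vertex_eq h c hh hper hpm']
    have hg1 : ∀ u, u ≤ 2*h → gg c u = 1 := by
      intro u hu
      unfold gg
      apply Finset.prod_eq_one
      intro i hi
      obtain ⟨hi1, hi2⟩ := Finset.mem_Icc.mp hi
      rw [hneg i hi1 (by omega) hi1]
      norm_num
    rw [hg1 (2*h) (le_refl _)]
    have hsum : ∑ u ∈ range (2*h), gg c u = (2*h : ℝ) := by
      rw [Finset.sum_congr rfl (fun u hu => hg1 u (le_of_lt (Finset.mem_range.mp hu)))]
      rw [Finset.sum_const, Finset.card_range]
      push_cast
      ring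
    rw [hsum]
    have : (0:ℝ) < (2*h:ℝ) := by positivity
    positivity
  | succ J ih =>
    intro c hper hb hstrict hneg
    by_cases hJn : J + 1 ≤ 2*h
    · have haff := EE_upd_aff h c (J+1) hh
      have h1 : 0 ≤ EE h (upd (2*h) c (J+1) 1) := by
        apply NN h hh J (upd (2*h) c (J+1) 1) (upd_per _ _ _ _ hper)
        · intro i hi1 hi2
          rw [upd_eval (2*h) c (J+1) 1 i hi1 hi2]
          by_cases hik : i = J+1
          · rw [if_pos hik]; norm_num
          · rw [if_neg hik]; exact hb i hi1 hi2
        · intro i hi1 hi2 hi3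
          rw [upd_eval (2*h) c (J+1) 1 i hi1 hi2]
          by_cases hik : i = J+1
          · rw [if_pos hik]; exact Or.inl rfl
          · rw [if_neg hik]
            exact Or.inr (hneg i hi1 hi2 (by omega))
      have h2 : 0 < EE h (upd (2*h) c (J+1) (-1)) := by
        apply ih (upd (2*h) c (J+1) (-1)) (upd_per _ _ _ _ hper)
        · intro i hi1 hi2
          rw [upd_eval (2*h) c (J+1) (-1) i hi1 hi2]
          by_cases hik : i = J+1
          · rw [if_pos hik]; norm_num
          · rw [if_neg hik]; exact hb i hi1 hi2
        · intro i hi1 hi2 hi3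
          rw [upd_eval (2*h) c (J+1) (-1) i hi1 hi2]
          rw [if_neg (by omega : ¬ i = J+1)]
          exact hstrict i hi1 hi2 (by omega)
        · intro i hi1 hi2 hi3
          rw [upd_eval (2*h) c (J+1) (-1) i hi1 hi2]
          by_cases hik : i = J+1
          · rw [if_pos hik]
          · rw [if_neg hik]
            exact hneg i hi1 hi2 (by omega)
      have hc : EE h c = EE h (upd (2*h) c (J+1) (c (J+1))) := by
        rw [upd_self (2*h) c (J+1) hper]
      have hck := hstrict (J+1) (by omega) hJn (le_refl _)
      rw [abs_lt] at hck
      have hi := haff.interp (c (J+1))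
      rw [hc, hi]
      have w1 : (0:ℝ) ≤ (1 + c (J+1))/2 := by linarith [hck.1]
      have w2 : (0:ℝ) < (1 - c (J+1))/2 := by linarith [hck.2]
      have t1 := mul_nonneg w1 h1
      have t2 := mul_pos w2 h2
      linarith
    · apply ih c hper hb
      · intro i hi1 hi2 hi3
        exact hstrict i hi1 hi2 (by omega)
      · intro i hi1 hi2 hi3
        exact absurd hi3 (by omega)

lemma per_of_add (n : ℕ) (hn : 0 < n) (c : ℕ → ℝ) (hp : ∀ i, c (i + n) = c i) :
    Per n c := by
  intro i
  induction i using Nat.strong_induction_on with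
  | _ i ih =>
    intro hi
    by_cases hin : i ≤ n
    · congr 1
      rw [Nat.mod_eq_of_lt (by omega)]
      omega
    · have e1 : c i = c (i - n) := by
        have := hp (i - n)
        rw [show i - n + n = i by omega] at this
        exact this
      rw [e1, ih (i - n) (by omega) (by omega)]
      congr 2
      rw [Nat.mod_eq_sub_mod (by omega : n ≤ i - 1)]
      congr 1
      omega

/-- Algebraic core of Theorem 3: for `q_A, q_B ∈ (0,1)`, `h ≥ 1`, positive integers
`a_1, …, a_{2h}`, and `b_{2j−1} = (−1)^{a_{2j−1}} q_A^{a_{2j−1}}`,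
`b_{2j} = (−1)^{a_{2j}} q_B^{a_{2j}}` extended periodically with period `2h`,
the quantity
`Q = h + Σ_{m=1}^{2h} Σ_{j=1}^{2h−1} (−1)^j Π_{i=m}^{m+j−1} b_i + h Π_{i=1}^{2h} b_i`
is strictly positive. -/
theorem Q_pos_algebraic_core
    (qA qB : ℝ) (hqA : qA ∈ Set.Ioo (0 : ℝ) 1) (hqB : qB ∈ Set.Ioo (0 : ℝ) 1)
    (h : ℕ) (hh : 1 ≤ h)
    (a : ℕ → ℕ) (ha : ∀ k, 1 ≤ k → k ≤ 2 * h → 1 ≤ a k)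
    (b : ℕ → ℝ)
    (hbper : ∀ i, b (i + 2 * h) = b i)
    (hb : ∀ j, 1 ≤ j → j ≤ h →
        b (2 * j - 1) = (-1 : ℝ) ^ a (2 * j - 1) * qA ^ a (2 * j - 1) ∧
        b (2 * j) = (-1 : ℝ) ^ a (2 * j) * qB ^ a (2 * j)) :
    0 < (h : ℝ)
        + (∑ m ∈ Finset.Icc 1 (2 * h), ∑ j ∈ Finset.Icc 1 (2 * h - 1),
            (-1 : ℝ) ^ j * ∏ i ∈ Finset.Icc m (m + j - 1), b i)
        + (h : ℝ) * ∏ i ∈ Finset.Icc 1 (2 * h), b i := by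
  have hper : Per (2*h) b := per_of_add (2*h) (by omega) b hbper
  have key : ∀ (q : ℝ), q ∈ Set.Ioo (0:ℝ) 1 → ∀ (e : ℕ), 1 ≤ e →
      |(-1 : ℝ)^e * q^e| < 1 := by
    intro q hq e he
    rw [abs_mul, abs_pow, abs_pow, abs_neg, abs_one, one_pow, one_mul,
      abs_of_pos hq.1]
    exact pow_lt_one₀ (le_of_lt hq.1) hq.2 (by omega)
  have hlt : ∀ i, 1 ≤ i → i ≤ 2*h → |b i| < 1 := by
    intro k hk1 hk2
    rcases Nat.even_or_odd k with he | ho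
    · obtain ⟨j, hj⟩ := he
      have hj1 : 1 ≤ j := by omega
      have hj2 : j ≤ h := by omega
      have := (hb j hj1 hj2).2
      rw [show 2*j = k by omega] at this
      rw [this]
      exact key qB hqB (a k) (ha k hk1 hk2)
    · obtain ⟨j, hj⟩ := ho
      have hj1 : 1 ≤ j + 1 := by omega
      have hj2 : j + 1 ≤ h := by omega
      have := (hb (j+1) hj1 hj2).1
      rw [show 2*(j+1) - 1 = k by omega] at this
      rw [this]
      exact key qA hqA (a k) (ha k hk1 hk2)
  have := POS h hh (2*h) b hper
    (fun i h1 h2 => le_of_lt (hlt i h1 h2))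
    (fun i h1 h2 _ => hlt i h1 h2)
    (fun i h1 h2 h3 => absurd h3 (by omega))
  exact this
end

section
/- (Lemma of Section 5: the pattern ABABBABBB.) Let p_A, p_B ∈ (0,1) with p_A ≠ p_B, and let D = ABABBABBB (so r = 3, s = 6, h = 3, block vector a = (1,1,1,2,1,3), and with x = q_A, y = q_B the associated values are b_1 = −x, b_2 = −y, b_3 = −x, b_4 = y², b_5 = −x, b_6 = −y³, extended with period 6). Then R_D = 2S[ (1+x)²(1+xy)(1−y²)(1+y³) + (1+y)(1−x²)(1+x)(1+y⁵) + (1+x³)(1−y⁶) ], and consequently R_D > 0. -/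
open Finset

/-- `p°` for a single arm with win probability `x` (Futurity parameter `J = 2`):
`p° = x (1-x)² / (1 - (1-x)²)`. -/
noncomputable def poArm (x : ℝ) : ℝ := x * (1 - x) ^ 2 / (1 - (1 - x) ^ 2)

/-- `p°_D = (1/(r+s)) Σ_{k=1}^{r+s} (Σ_{j=1}^{r+s} p_j Π_{i=j+1}^{j+2k} q_i) / (1 − (q_A^r q_B^s)²)`. -/
noncomputable def pCircD (p : ℕ → ℝ) (r s : ℕ) (qA qB : ℝ) : ℝ :=
  (1 / ((r + s : ℕ) : ℝ)) *
    ∑ k ∈ Finset.Icc 1 (r + s),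
      (∑ j ∈ Finset.Icc 1 (r + s),
          p j * ∏ i ∈ Finset.Icc (j + 1) (j + 2 * k), (1 - p i)) /
        (1 - (qA ^ r * qB ^ s) ^ 2)

/-- The casino's asymptotic profit per coup `R_D = 2(r p°_A + s p°_B)/(r+s) − 2 p°_D`. -/
noncomputable def RD (p : ℕ → ℝ) (r s : ℕ) (pA pB : ℝ) : ℝ :=
  2 * ((r : ℝ) * poArm pA + (s : ℝ) * poArm pB) / ((r + s : ℕ) : ℝ)
    - 2 * pCircD p r s (1 - pA) (1 - pB)

/-- `S = (q_A − q_B)²(1 + (−1)^{r+s} q_A^r q_B^s) /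
      ((r+s)(1+q_A)²(1+q_B)²(1 − (q_A^r q_B^s)²))`. -/
noncomputable def Sval (qA qB : ℝ) (r s : ℕ) : ℝ :=
  (qA - qB) ^ 2 * (1 + (-1 : ℝ) ^ (r + s) * qA ^ r * qB ^ s) /
    (((r + s : ℕ) : ℝ) * (1 + qA) ^ 2 * (1 + qB) ^ 2 * (1 - (qA ^ r * qB ^ s) ^ 2))

/-- The strategy `D = ABABBABBB`: `p_i = p_A` for `i ≡ 1, 3, 6 (mod 9)` and
`p_i = p_B` otherwise. -/
noncomputable def patternABABBABBB (pA pB : ℝ) (i : ℕ) : ℝ :=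
  if i % 9 = 1 ∨ i % 9 = 3 ∨ i % 9 = 6 then pA else pB


set_option maxHeartbeats 4000000 in
lemma sumP_ABABBABBB (pA pB : ℝ) :
    (∑ k ∈ Finset.Icc 1 9, ∑ j ∈ Finset.Icc 1 9,
        patternABABBABBB pA pB j *
          ∏ i ∈ Finset.Icc (j + 1) (j + 2 * k), (1 - patternABABBABBB pA pB i))
      = 54 * pB + (-351) * pB ^ 2 + 1296 * pB ^ 3 + (-3279) * pB ^ 4 + 6000 * pB ^ 5 + (-8164) * pB ^ 6 + 8361 * pB ^ 7 + (-6446) * pB ^ 8 + 3695 * pB ^ 9 + (-1530) * pB ^ 10 + 433 * pB ^ 11 + (-75) * pB ^ 12 + 6 * pB ^ 13 + 27 * pA + (-378) * pA * pB + 2259 * pA * pB ^ 2 + (-8250) * pA * pB ^ 3 + 20655 * pA * pB ^ 4 + (-37422) * pA * pB ^ 5 + 50466 * pA * pB ^ 6 + (-51281) * pA * pB ^ 7 + 39266 * pA * pB ^ 8 + (-22377) * pA * pB ^ 9 + 9223 * pA * pB ^ 10 + (-2602) * pA * pB ^ 11 + 450 * pA * pB ^ 12 + (-36) * pA * pB ^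 13 + (-81) * pA ^ 2 + 1044 * pA ^ 2 * pB + (-6183) * pA ^ 2 * pB ^ 2 + 22395 * pA ^ 2 * pB ^ 3 + (-55500) * pA ^ 2 * pB ^ 4 + 99474 * pA ^ 2 * pB ^ 5 + (-132704) * pA ^ 2 * pB ^ 6 + 133448 * pA ^ 2 * pB ^ 7 + (-101184) * pA ^ 2 * pB ^ 8 + 57148 * pA ^ 2 * pB ^ 9 + (-23371) * pA ^ 2 * pB ^ 10 + 6552 * pA ^ 2 * pB ^ 11 + (-1128) * pA ^ 2 * pB ^ 12 + 90 * pA ^ 2 * pB ^ 13 + 126 * pA ^ 3 + (-1608) * pA ^ 3 * pB + 9426 * pA ^ 3 * pB ^ 2 + (-33763) * pA ^ 3 * pB ^ 3 + 82641 * pA ^ 3 * pB ^ 4 + (-146146) * pA ^ 3 * pB ^ 5 + 192253 * pA ^ 3 * pB ^ 6 + (-190596) * pA ^ 3 * pB ^ 7 + 142487 * pA ^ 3 * pB ^ 8 + (-79383) * pA ^ 3 * pB ^ 9 + 32052 * pA ^ 3 * pB ^ 10 + (-8884) * pA ^ 3 * pB ^ 11 + 1515 * pA ^ 3 * pB ^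 12 + (-120) * pA ^ 3 * pB ^ 13 + (-120) * pA ^ 4 + 1503 * pA ^ 4 * pB + (-8676) * pA ^ 4 * pB ^ 2 + 30612 * pA ^ 4 * pB ^ 3 + (-73741) * pA ^ 4 * pB ^ 4 + 128173 * pA ^ 4 * pB ^ 5 + (-165504) * pA ^ 4 * pB ^ 6 + 160871 * pA ^ 4 * pB ^ 7 + (-117812) * pA ^ 4 * pB ^ 8 + 64266 * pA ^ 4 * pB ^ 9 + (-25408) * pA ^ 4 * pB ^ 10 + 6901 * pA ^ 4 * pB ^ 11 + (-1155) * pA ^ 4 * pB ^ 12 + 90 * pA ^ 4 * pB ^ 13 + 69 * pA ^ 5 + (-849) * pA ^ 5 * pB + 4818 * pA ^ 5 * pB ^ 2 + (-16699) * pA ^ 5 * pB ^ 3 + 39445 * pA ^ 5 * pB ^ 4 + (-67071) * pA ^ 5 * pB ^ 5 + 84491 * pA ^ 5 * pB ^ 6 + (-79883) * pA ^ 5 * pB ^ 7 + 56730 * pA ^ 5 * pB ^ 8 + (-29920) * pA ^ 5 * pB ^ 9 + 11407 * pA ^ 5 * pB ^ 10 + (-2982) * pA ^ 5 * pB ^ 11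 + 480 * pA ^ 5 * pB ^ 12 + (-36) * pA ^ 5 * pB ^ 13 + (-22) * pA ^ 6 + 267 * pA ^ 6 * pB + (-1491) * pA ^ 6 * pB ^ 2 + 5070 * pA ^ 6 * pB ^ 3 + (-11706) * pA ^ 6 * pB ^ 4 + 19368 * pA ^ 6 * pB ^ 5 + (-23610) * pA ^ 6 * pB ^ 6 + 21456 * pA ^ 6 * pB ^ 7 + (-14526) * pA ^ 6 * pB ^ 8 + 7231 * pA ^ 6 * pB ^ 9 + (-2571) * pA ^ 6 * pB ^ 10 + 618 * pA ^ 6 * pB ^ 11 + (-90) * pA ^ 6 * pB ^ 12 + 6 * pA ^ 6 * pB ^ 13 + 3 * pA ^ 7 + (-36) * pA ^ 7 * pB + 198 * pA ^ 7 * pB ^ 2 + (-660) * pA ^ 7 * pB ^ 3 + 1485 * pA ^ 7 * pB ^ 4 + (-2376) * pA ^ 7 * pB ^ 5 + 2772 * pA ^ 7 * pB ^ 6 + (-2376) * pA ^ 7 * pB ^ 7 + 1485 * pA ^ 7 * pB ^ 8 + (-660) * pA ^ 7 * pB ^ 9 + 198 * pA ^ 7 * pB ^ 10 + (-36) * pA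 ^ 7 * pB ^ 11 + 3 * pA ^ 7 * pB ^ 12 := by
  simp only [patternABABBABBB]
  norm_num [Finset.sum_Icc_succ_top, Finset.prod_Icc_succ_top]
  ring

set_option maxHeartbeats 4000000 in
lemma pcirc_ABABBABBB (pA pB : ℝ) :
    pCircD (patternABABBABBB pA pB) 3 6 (1 - pA) (1 - pB)
      = (1 / 9) * ((54 * pB + (-351) * pB ^ 2 + 1296 * pB ^ 3 + (-3279) * pB ^ 4 + 6000 * pB ^ 5 + (-8164) * pB ^ 6 + 8361 * pB ^ 7 + (-6446) * pB ^ 8 + 3695 * pB ^ 9 + (-1530) * pB ^ 10 + 433 * pB ^ 11 + (-75) * pB ^ 12 + 6 * pB ^ 13 + 27 * pA + (-378) * pA * pB + 2259 * pA * pB ^ 2 + (-8250) * pA * pB ^ 3 + 20655 * pA * pB ^ 4 + (-37422) * pA * pB ^ 5 + 50466 * pA * pB ^ 6 + (-51281) * pA * pB ^ 7 + 39266 * pA * pB ^ 8 + (-22377) * pA * pB ^ 9 + 9223 * pA * pB ^ 10 + (-2602) * pA * pB ^ 11 + 450 * pA * pB ^ 12 + (-36) * pA * pB ^ 13 + (-81)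 * pA ^ 2 + 1044 * pA ^ 2 * pB + (-6183) * pA ^ 2 * pB ^ 2 + 22395 * pA ^ 2 * pB ^ 3 + (-55500) * pA ^ 2 * pB ^ 4 + 99474 * pA ^ 2 * pB ^ 5 + (-132704) * pA ^ 2 * pB ^ 6 + 133448 * pA ^ 2 * pB ^ 7 + (-101184) * pA ^ 2 * pB ^ 8 + 57148 * pA ^ 2 * pB ^ 9 + (-23371) * pA ^ 2 * pB ^ 10 + 6552 * pA ^ 2 * pB ^ 11 + (-1128) * pA ^ 2 * pB ^ 12 + 90 * pA ^ 2 * pB ^ 13 + 126 * pA ^ 3 + (-1608) * pA ^ 3 * pB + 9426 * pA ^ 3 * pB ^ 2 + (-33763) * pA ^ 3 * pB ^ 3 + 82641 * pA ^ 3 * pB ^ 4 + (-146146) * pA ^ 3 * pB ^ 5 + 192253 * pA ^ 3 * pB ^ 6 + (-190596) * pA ^ 3 * pB ^ 7 + 142487 * pA ^ 3 * pB ^ 8 + (-79383) * pA ^ 3 * pB ^ 9 + 32052 * pA ^ 3 * pB ^ 10 + (-8884) * pA ^ 3 * pB ^ 11 + 1515 * pA ^ 3 * pB ^ 12 + (-120)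 * pA ^ 3 * pB ^ 13 + (-120) * pA ^ 4 + 1503 * pA ^ 4 * pB + (-8676) * pA ^ 4 * pB ^ 2 + 30612 * pA ^ 4 * pB ^ 3 + (-73741) * pA ^ 4 * pB ^ 4 + 128173 * pA ^ 4 * pB ^ 5 + (-165504) * pA ^ 4 * pB ^ 6 + 160871 * pA ^ 4 * pB ^ 7 + (-117812) * pA ^ 4 * pB ^ 8 + 64266 * pA ^ 4 * pB ^ 9 + (-25408) * pA ^ 4 * pB ^ 10 + 6901 * pA ^ 4 * pB ^ 11 + (-1155) * pA ^ 4 * pB ^ 12 + 90 * pA ^ 4 * pB ^ 13 + 69 * pA ^ 5 + (-849) * pA ^ 5 * pB + 4818 * pA ^ 5 * pB ^ 2 + (-16699) * pA ^ 5 * pB ^ 3 + 39445 * pA ^ 5 * pB ^ 4 + (-67071) * pA ^ 5 * pB ^ 5 + 84491 * pA ^ 5 * pB ^ 6 + (-79883) * pA ^ 5 * pB ^ 7 + 56730 * pA ^ 5 * pB ^ 8 + (-29920) * pA ^ 5 * pB ^ 9 + 11407 * pA ^ 5 * pB ^ 10 + (-2982) * pA ^ 5 * pB ^ 11 + 480 *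 pA ^ 5 * pB ^ 12 + (-36) * pA ^ 5 * pB ^ 13 + (-22) * pA ^ 6 + 267 * pA ^ 6 * pB + (-1491) * pA ^ 6 * pB ^ 2 + 5070 * pA ^ 6 * pB ^ 3 + (-11706) * pA ^ 6 * pB ^ 4 + 19368 * pA ^ 6 * pB ^ 5 + (-23610) * pA ^ 6 * pB ^ 6 + 21456 * pA ^ 6 * pB ^ 7 + (-14526) * pA ^ 6 * pB ^ 8 + 7231 * pA ^ 6 * pB ^ 9 + (-2571) * pA ^ 6 * pB ^ 10 + 618 * pA ^ 6 * pB ^ 11 + (-90) * pA ^ 6 * pB ^ 12 + 6 * pA ^ 6 * pB ^ 13 + 3 * pA ^ 7 + (-36) * pA ^ 7 * pB + 198 * pA ^ 7 * pB ^ 2 + (-660) * pA ^ 7 * pB ^ 3 + 1485 * pA ^ 7 * pB ^ 4 + (-2376) * pA ^ 7 * pB ^ 5 + 2772 * pA ^ 7 * pB ^ 6 + (-2376) * pA ^ 7 * pB ^ 7 + 1485 * pA ^ 7 * pB ^ 8 + (-660) * pA ^ 7 * pB ^ 9 + 198 * pA ^ 7 * pB ^ 10 + (-36) * pA ^ 7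 * pB ^ 11 + 3 * pA ^ 7 * pB ^ 12) / (1 - ((1 - pA) ^ 3 * (1 - pB) ^ 6) ^ 2)) := by
  have h9 : (3 + 6 : ℕ) = 9 := by norm_num
  rw [pCircD, h9, ← Finset.sum_div, sumP_ABABBABBB]
  norm_num

set_option maxHeartbeats 4000000 in
lemma main_ABABBABBB (pA pB : ℝ) :
    (3 * ((1 - pA) ^ 2 * (1 + (1 - pA)) * (1 + (1 - pB)) ^ 2)
        + 6 * ((1 - pB) ^ 2 * (1 + (1 - pA)) ^ 2 * (1 + (1 - pB))))
        * (1 - ((1 - pA) ^ 3 * (1 - pB) ^ 6) ^ 2)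
      - (54 * pB + (-351) * pB ^ 2 + 1296 * pB ^ 3 + (-3279) * pB ^ 4 + 6000 * pB ^ 5 + (-8164) * pB ^ 6 + 8361 * pB ^ 7 + (-6446) * pB ^ 8 + 3695 * pB ^ 9 + (-1530) * pB ^ 10 + 433 * pB ^ 11 + (-75) * pB ^ 12 + 6 * pB ^ 13 + 27 * pA + (-378) * pA * pB + 2259 * pA * pB ^ 2 + (-8250) * pA * pB ^ 3 + 20655 * pA * pB ^ 4 + (-37422) * pA * pB ^ 5 + 50466 * pA * pB ^ 6 + (-51281) * pA * pB ^ 7 + 39266 * pA * pB ^ 8 + (-22377) * pA * pB ^ 9 + 9223 * pA * pB ^ 10 + (-2602) * pA * pB ^ 11 + 450 * pA * pB ^ 12 + (-36) * pA * pB ^ 13 + (-81) * pA ^ 2 + 1044 * pA ^ 2 * pB + (-6183) * pA ^ 2 * pB ^ 2 + 22395 * pA ^ 2 * pB ^ 3 + (-55500) * pA ^ 2 * pB ^ 4 + 99474 * pA ^ 2 * pB ^ 5 + (-132704) * pA ^ 2 * pB ^ 6 + 133448 * pA ^ 2 * pB ^ 7 + (-101184) * pA ^ 2 * pB ^ 8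 + 57148 * pA ^ 2 * pB ^ 9 + (-23371) * pA ^ 2 * pB ^ 10 + 6552 * pA ^ 2 * pB ^ 11 + (-1128) * pA ^ 2 * pB ^ 12 + 90 * pA ^ 2 * pB ^ 13 + 126 * pA ^ 3 + (-1608) * pA ^ 3 * pB + 9426 * pA ^ 3 * pB ^ 2 + (-33763) * pA ^ 3 * pB ^ 3 + 82641 * pA ^ 3 * pB ^ 4 + (-146146) * pA ^ 3 * pB ^ 5 + 192253 * pA ^ 3 * pB ^ 6 + (-190596) * pA ^ 3 * pB ^ 7 + 142487 * pA ^ 3 * pB ^ 8 + (-79383) * pA ^ 3 * pB ^ 9 + 32052 * pA ^ 3 * pB ^ 10 + (-8884) * pA ^ 3 * pB ^ 11 + 1515 * pA ^ 3 * pB ^ 12 + (-120) * pA ^ 3 * pB ^ 13 + (-120) * pA ^ 4 + 1503 * pA ^ 4 * pB + (-8676) * pA ^ 4 * pB ^ 2 + 30612 * pA ^ 4 * pB ^ 3 + (-73741) * pA ^ 4 * pB ^ 4 + 128173 * pA ^ 4 * pB ^ 5 + (-165504) * pA ^ 4 * pB ^ 6 + 160871 * pA ^ 4 * pB ^ 7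 + (-117812) * pA ^ 4 * pB ^ 8 + 64266 * pA ^ 4 * pB ^ 9 + (-25408) * pA ^ 4 * pB ^ 10 + 6901 * pA ^ 4 * pB ^ 11 + (-1155) * pA ^ 4 * pB ^ 12 + 90 * pA ^ 4 * pB ^ 13 + 69 * pA ^ 5 + (-849) * pA ^ 5 * pB + 4818 * pA ^ 5 * pB ^ 2 + (-16699) * pA ^ 5 * pB ^ 3 + 39445 * pA ^ 5 * pB ^ 4 + (-67071) * pA ^ 5 * pB ^ 5 + 84491 * pA ^ 5 * pB ^ 6 + (-79883) * pA ^ 5 * pB ^ 7 + 56730 * pA ^ 5 * pB ^ 8 + (-29920) * pA ^ 5 * pB ^ 9 + 11407 * pA ^ 5 * pB ^ 10 + (-2982) * pA ^ 5 * pB ^ 11 + 480 * pA ^ 5 * pB ^ 12 + (-36) * pA ^ 5 * pB ^ 13 + (-22) * pA ^ 6 + 267 * pA ^ 6 * pB + (-1491) * pA ^ 6 * pB ^ 2 + 5070 * pA ^ 6 * pB ^ 3 + (-11706) * pA ^ 6 * pB ^ 4 + 19368 * pA ^ 6 * pB ^ 5 + (-23610) * pA ^ 6 * pB ^ 6 +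 21456 * pA ^ 6 * pB ^ 7 + (-14526) * pA ^ 6 * pB ^ 8 + 7231 * pA ^ 6 * pB ^ 9 + (-2571) * pA ^ 6 * pB ^ 10 + 618 * pA ^ 6 * pB ^ 11 + (-90) * pA ^ 6 * pB ^ 12 + 6 * pA ^ 6 * pB ^ 13 + 3 * pA ^ 7 + (-36) * pA ^ 7 * pB + 198 * pA ^ 7 * pB ^ 2 + (-660) * pA ^ 7 * pB ^ 3 + 1485 * pA ^ 7 * pB ^ 4 + (-2376) * pA ^ 7 * pB ^ 5 + 2772 * pA ^ 7 * pB ^ 6 + (-2376) * pA ^ 7 * pB ^ 7 + 1485 * pA ^ 7 * pB ^ 8 + (-660) * pA ^ 7 * pB ^ 9 + 198 * pA ^ 7 * pB ^ 10 + (-36) * pA ^ 7 * pB ^ 11 + 3 * pA ^ 7 * pB ^ 12) * ((1 + (1 - pA)) ^ 2 * (1 + (1 - pB)) ^ 2)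
      = ((1 - pA) - (1 - pB)) ^ 2 * (1 - (1 - pA) ^ 3 * (1 - pB) ^ 6) *
          ((1 + (1 - pA)) ^ 2 * (1 + (1 - pA) * (1 - pB)) * (1 - (1 - pB) ^ 2) * (1 + (1 - pB) ^ 3)
            + (1 + (1 - pB)) * (1 - (1 - pA) ^ 2) * (1 + (1 - pA)) * (1 + (1 - pB) ^ 5)
            + (1 + (1 - pA) ^ 3) * (1 - (1 - pB) ^ 6)) := by
  ring

set_option maxRecDepth 8000 in
set_option maxHeartbeats 4000000 in
/-- Lemma of Section 5: for the pattern `D = ABABBABBB` (so `r = 3`, `s = 6`),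
with `x = q_A` and `y = q_B`,
`R_D = 2S[(1+x)²(1+xy)(1−y²)(1+y³) + (1+y)(1−x²)(1+x)(1+y⁵) + (1+x³)(1−y⁶)]`,
and consequently `R_D > 0`. -/
theorem pattern_ABABBABBB_profit
    (pA pB qA qB : ℝ) (hpA : pA ∈ Set.Ioo (0 : ℝ) 1) (hpB : pB ∈ Set.Ioo (0 : ℝ) 1)
    (hne : pA ≠ pB) (hqA : qA = 1 - pA) (hqB : qB = 1 - pB) :
    RD (patternABABBABBB pA pB) 3 6 pA pB
        = 2 * Sval qA qB 3 6 *
            ((1 + qA) ^ 2 * (1 + qA * qB) * (1 - qB ^ 2) * (1 + qB ^ 3)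
              + (1 + qB) * (1 - qA ^ 2) * (1 + qA) * (1 + qB ^ 5)
              + (1 + qA ^ 3) * (1 - qB ^ 6)) ∧
      0 < RD (patternABABBABBB pA pB) 3 6 pA pB := by
  obtain ⟨hA0, hA1⟩ := hpA
  obtain ⟨hB0, hB1⟩ := hpB
  subst hqA; subst hqB
  have hx0 : (0:ℝ) < 1 - pA := by linarith
  have hx1 : (1:ℝ) - pA < 1 := by linarith
  have hy0 : (0:ℝ) < 1 - pB := by linarith
  have hy1 : (1:ℝ) - pB < 1 := by linarith
  have hprod : (0:ℝ) < (1 - pA) ^ 3 * (1 - pB) ^ 6 := by positivity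
  have hxp : (1 - pA) ^ 3 < 1 := pow_lt_one₀ hx0.le hx1 (by norm_num)
  have hyp : (1 - pB) ^ 6 < 1 := pow_lt_one₀ hy0.le hy1 (by norm_num)
  have hprod1 : (1 - pA) ^ 3 * (1 - pB) ^ 6 < 1 :=
    lt_of_le_of_lt (mul_le_of_le_one_right (by positivity) hyp.le) hxp
  have hsq : ((1 - pA) ^ 3 * (1 - pB) ^ 6) ^ 2 < 1 := pow_lt_one₀ hprod.le hprod1 (by norm_num)
  have h3 : (1:ℝ) - ((1 - pA) ^ 3 * (1 - pB) ^ 6) ^ 2 ≠ 0 := ne_of_gt (by linarith)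
  have hx2 : (1 - pA) ^ 2 < 1 := pow_lt_one₀ hx0.le hx1 (by norm_num)
  have hy2 : (1 - pB) ^ 2 < 1 := pow_lt_one₀ hy0.le hy1 (by norm_num)
  have h1 : (1:ℝ) - (1 - pA) ^ 2 ≠ 0 := ne_of_gt (by linarith)
  have h2 : (1:ℝ) - (1 - pB) ^ 2 ≠ 0 := ne_of_gt (by linarith)
  have h4 : (1:ℝ) + (1 - pA) ≠ 0 := ne_of_gt (by linarith)
  have h5 : (1:ℝ) + (1 - pB) ≠ 0 := ne_of_gt (by linarith)
  have hA' : poArm pA = (1 - pA) ^ 2 / (1 + (1 - pA)) := by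
    rw [poArm, div_eq_div_iff h1 h4]; ring
  have hB' : poArm pB = (1 - pB) ^ 2 / (1 + (1 - pB)) := by
    rw [poArm, div_eq_div_iff h2 h5]; ring
  have hSval : Sval (1 - pA) (1 - pB) 3 6
      = ((1 - pA) - (1 - pB)) ^ 2 * (1 - (1 - pA) ^ 3 * (1 - pB) ^ 6) /
          (9 * (1 + (1 - pA)) ^ 2 * (1 + (1 - pB)) ^ 2 *
            (1 - ((1 - pA) ^ 3 * (1 - pB) ^ 6) ^ 2)) := by
    rw [Sval]
    norm_num
    ring_nf
  have hMain := main_ABABBABBB pA pB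
  have key : RD (patternABABBABBB pA pB) 3 6 pA pB
      = 2 * Sval (1 - pA) (1 - pB) 3 6 *
          ((1 + (1 - pA)) ^ 2 * (1 + (1 - pA) * (1 - pB)) * (1 - (1 - pB) ^ 2) * (1 + (1 - pB) ^ 3)
            + (1 + (1 - pB)) * (1 - (1 - pA) ^ 2) * (1 + (1 - pA)) * (1 + (1 - pB) ^ 5)
            + (1 + (1 - pA) ^ 3) * (1 - (1 - pB) ^ 6)) := by
    rw [RD, pcirc_ABABBABBB, hA', hB', hSval]
    rw [show ((3 + 6 : ℕ) : ℝ) = 9 from by norm_num,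
        show ((3 : ℕ) : ℝ) = 3 from by norm_num, show ((6 : ℕ) : ℝ) = 6 from by norm_num]
    generalize hDv : (1:ℝ) - ((1 - pA) ^ 3 * (1 - pB) ^ 6) ^ 2 = Dv at hMain h3 ⊢
    generalize hPv : (54 * pB + (-351) * pB ^ 2 + 1296 * pB ^ 3 + (-3279) * pB ^ 4 + 6000 * pB ^ 5 + (-8164) * pB ^ 6 + 8361 * pB ^ 7 + (-6446) * pB ^ 8 + 3695 * pB ^ 9 + (-1530) * pB ^ 10 + 433 * pB ^ 11 + (-75) * pB ^ 12 + 6 * pB ^ 13 + 27 * pA + (-378) * pA * pB + 2259 * pA * pB ^ 2 + (-8250) * pA * pB ^ 3 + 20655 * pA * pB ^ 4 + (-37422) * pA * pB ^ 5 + 50466 * pA * pB ^ 6 + (-51281) * pA * pB ^ 7 + 39266 * pA * pB ^ 8 + (-22377) * pA * pB ^ 9 + 9223 * pA * pB ^ 10 + (-2602) * pA * pB ^ 11 + 450 * pA * pB ^ 12 + (-36) * pA * pB ^ 13 + (-81) * pA ^ 2 + 1044 * pA ^ 2 * pB + (-6183) * pA ^ 2 * pB ^ 2 + 22395 * pA ^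 2 * pB ^ 3 + (-55500) * pA ^ 2 * pB ^ 4 + 99474 * pA ^ 2 * pB ^ 5 + (-132704) * pA ^ 2 * pB ^ 6 + 133448 * pA ^ 2 * pB ^ 7 + (-101184) * pA ^ 2 * pB ^ 8 + 57148 * pA ^ 2 * pB ^ 9 + (-23371) * pA ^ 2 * pB ^ 10 + 6552 * pA ^ 2 * pB ^ 11 + (-1128) * pA ^ 2 * pB ^ 12 + 90 * pA ^ 2 * pB ^ 13 + 126 * pA ^ 3 + (-1608) * pA ^ 3 * pB + 9426 * pA ^ 3 * pB ^ 2 + (-33763) * pA ^ 3 * pB ^ 3 + 82641 * pA ^ 3 * pB ^ 4 + (-146146) * pA ^ 3 * pB ^ 5 + 192253 * pA ^ 3 * pB ^ 6 + (-190596) * pA ^ 3 * pB ^ 7 + 142487 * pA ^ 3 * pB ^ 8 + (-79383) * pA ^ 3 * pB ^ 9 + 32052 * pA ^ 3 * pB ^ 10 + (-8884) * pA ^ 3 * pB ^ 11 + 1515 * pA ^ 3 * pB ^ 12 + (-120) * pA ^ 3 * pB ^ 13 + (-120) * pA ^ 4 + 1503 * pA ^ 4 * pB + (-8676) * pA ^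 4 * pB ^ 2 + 30612 * pA ^ 4 * pB ^ 3 + (-73741) * pA ^ 4 * pB ^ 4 + 128173 * pA ^ 4 * pB ^ 5 + (-165504) * pA ^ 4 * pB ^ 6 + 160871 * pA ^ 4 * pB ^ 7 + (-117812) * pA ^ 4 * pB ^ 8 + 64266 * pA ^ 4 * pB ^ 9 + (-25408) * pA ^ 4 * pB ^ 10 + 6901 * pA ^ 4 * pB ^ 11 + (-1155) * pA ^ 4 * pB ^ 12 + 90 * pA ^ 4 * pB ^ 13 + 69 * pA ^ 5 + (-849) * pA ^ 5 * pB + 4818 * pA ^ 5 * pB ^ 2 + (-16699) * pA ^ 5 * pB ^ 3 + 39445 * pA ^ 5 * pB ^ 4 + (-67071) * pA ^ 5 * pB ^ 5 + 84491 * pA ^ 5 * pB ^ 6 + (-79883) * pA ^ 5 * pB ^ 7 + 56730 * pA ^ 5 * pB ^ 8 + (-29920) * pA ^ 5 * pB ^ 9 + 11407 * pA ^ 5 * pB ^ 10 + (-2982) * pA ^ 5 * pB ^ 11 + 480 * pA ^ 5 * pB ^ 12 + (-36) * pA ^ 5 * pB ^ 13 + (-22) * pA ^ 6 + 267 * pA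 ^ 6 * pB + (-1491) * pA ^ 6 * pB ^ 2 + 5070 * pA ^ 6 * pB ^ 3 + (-11706) * pA ^ 6 * pB ^ 4 + 19368 * pA ^ 6 * pB ^ 5 + (-23610) * pA ^ 6 * pB ^ 6 + 21456 * pA ^ 6 * pB ^ 7 + (-14526) * pA ^ 6 * pB ^ 8 + 7231 * pA ^ 6 * pB ^ 9 + (-2571) * pA ^ 6 * pB ^ 10 + 618 * pA ^ 6 * pB ^ 11 + (-90) * pA ^ 6 * pB ^ 12 + 6 * pA ^ 6 * pB ^ 13 + 3 * pA ^ 7 + (-36) * pA ^ 7 * pB + 198 * pA ^ 7 * pB ^ 2 + (-660) * pA ^ 7 * pB ^ 3 + 1485 * pA ^ 7 * pB ^ 4 + (-2376) * pA ^ 7 * pB ^ 5 + 2772 * pA ^ 7 * pB ^ 6 + (-2376) * pA ^ 7 * pB ^ 7 + 1485 * pA ^ 7 * pB ^ 8 + (-660) * pA ^ 7 * pB ^ 9 + 198 * pA ^ 7 * pB ^ 10 + (-36) * pA ^ 7 * pB ^ 11 + 3 * pA ^ 7 * pB ^ 12) = Pv at hMain ⊢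
    generalize hx : (1:ℝ) - pA = x at hMain h4 ⊢
    generalize hy : (1:ℝ) - pB = y at hMain h5 ⊢
    field_simp
    linear_combination hMain
  refine ⟨key, ?_⟩
  rw [key]
  have hS : 0 < Sval (1 - pA) (1 - pB) 3 6 := by
    rw [hSval]
    apply div_pos
    · have hne' : (1 - pA) - (1 - pB) ≠ 0 := by
        intro h; exact hne (by linarith [sub_eq_zero.mp h])
      exact mul_pos (by positivity) (by linarith)
    · have e1 : (0:ℝ) < (1 + (1 - pA)) ^ 2 := by positivity
      have e2 : (0:ℝ) < (1 + (1 - pB)) ^ 2 := by positivity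
      have e3 : (0:ℝ) < 1 - ((1 - pA) ^ 3 * (1 - pB) ^ 6) ^ 2 := by linarith
      positivity
  have hbr : (0:ℝ) <
      (1 + (1 - pA)) ^ 2 * (1 + (1 - pA) * (1 - pB)) * (1 - (1 - pB) ^ 2) * (1 + (1 - pB) ^ 3)
        + (1 + (1 - pB)) * (1 - (1 - pA) ^ 2) * (1 + (1 - pA)) * (1 + (1 - pB) ^ 5)
        + (1 + (1 - pA) ^ 3) * (1 - (1 - pB) ^ 6) := by
    have t1 : (0:ℝ) < (1 + (1 - pA)) ^ 2 * (1 + (1 - pA) * (1 - pB)) * (1 - (1 - pB) ^ 2) *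
        (1 + (1 - pB) ^ 3) :=
      mul_pos (mul_pos (mul_pos (by positivity) (by positivity)) (by linarith)) (by positivity)
    have t2 : (0:ℝ) < (1 + (1 - pB)) * (1 - (1 - pA) ^ 2) * (1 + (1 - pA)) * (1 + (1 - pB) ^ 5) :=
      mul_pos (mul_pos (mul_pos (by positivity) (by linarith)) (by positivity)) (by positivity)
    have t3 : (0:ℝ) < (1 + (1 - pA) ^ 3) * (1 - (1 - pB) ^ 6) :=
      mul_pos (by positivity) (by linarith)
    linarith
  positivity
end
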